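/- Let a ∈ ℝ², r > 0, p ∈ [1,2] and c > 0. Let g : ℝ² → [0,∞) be measurable with ∫₀^{2π} g(a + r(cos θ, sin θ))² · r dθ < ∞. Then (1/p) ∫₀^{2π} g(a + r(cos θ, sin θ))^p · r dθ − c^p/(p (2π r)^{p−1}) ≤ (2π r / c)^{2−p} · [ (1/2) ∫₀^{2π} g(a + r(cos θ, sin θ))² · r dθ − c²/(4π r) ]. -/

import Mathlib

open Real MeasureTheory

/-- The point `a + r(cos θ, sin θ)` on the circle of center `a` and radius `r` in the
Euclidean plane. -/
noncomputable def circlePt (a : EuclideanSpace ℝ (Fin 2)) (r θ : ℝ) :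
    EuclideanSpace ℝ (Fin 2) :=
  a + r • (WithLp.equiv 2 (Fin 2 → ℝ)).symm ![Real.cos θ, Real.sin θ]

/-- Hölder-type estimate on circles (Lemma 2.22 of the paper): for a measurable
nonnegative `g` whose square is integrable on the circle `∂B(a;r)`, any `p ∈ [1,2]`
and any constant `c > 0`,
`(1/p)∫ g^p r dθ - c^p/(p (2πr)^{p-1}) ≤ (2πr/c)^{2-p} [ (1/2)∫ g² r dθ - c²/(4πr) ]`. -/
theorem holder_type_circle_estimate (a : EuclideanSpace ℝ (Fin 2)) (r : ℝ) (hr : 0 < r)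
    (p : ℝ) (hp1 : 1 ≤ p) (hp2 : p ≤ 2) (c : ℝ) (hc : 0 < c)
    (g : EuclideanSpace ℝ (Fin 2) → ℝ) (hg : Measurable g) (hgnn : ∀ x, 0 ≤ g x)
    (hint : IntervalIntegrable (fun θ => g (circlePt a r θ) ^ 2 * r) volume 0 (2 * π)) :
    (1 / p) * (∫ θ in (0:ℝ)..(2 * π), g (circlePt a r θ) ^ p * r)
        - c ^ p / (p * (2 * π * r) ^ (p - 1)) ≤
      (2 * π * r / c) ^ (2 - p) *
        ((1 / 2) * (∫ θ in (0:ℝ)..(2 * π), g (circlePt a r θ) ^ 2 * r)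
          - c ^ 2 / (4 * π * r)) := by
  have hπ : 0 < π := Real.pi_pos
  have hp0 : (0:ℝ) < p := lt_of_lt_of_le one_pos hp1
  set L : ℝ := 2 * π * r with hLdef
  have hL0 : 0 < L := by positivity
  set K : ℝ := c / L with hKdef
  have hK : 0 < K := div_pos hc hL0
  set F : ℝ → ℝ := fun θ => g (circlePt a r θ) with hFdef
  have hFnn : ∀ θ, 0 ≤ F θ := fun θ => hgnn _
  have hFmeas : Measurable F := by
    refine hg.comp ?_
    refine Continuous.measurable ?_
    unfold circlePt
    refine continuous_const.add (Continuous.const_smul ?_ r)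
    exact (PiLp.continuous_toLp 2 (fun _ : Fin 2 => ℝ)).comp (by
      refine continuous_pi ?_
      intro i
      fin_cases i <;> simp [Real.continuous_cos, Real.continuous_sin])
  -- pointwise inequality
  have hKp2 : (0:ℝ) ≤ K ^ (p - 2) := (Real.rpow_pos_of_pos hK _).le
  have hpt : ∀ θ, F θ ^ p ≤ ((p/2) * F θ ^ 2 + (1 - p/2) * K ^ 2) * K ^ (p - 2) := by
    intro θ
    have h1 : (F θ ^ 2) ^ (p/2) * (K ^ 2) ^ (1 - p/2) ≤ (p/2) * F θ ^ 2 + (1 - p/2) * K ^ 2 :=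
      Real.geom_mean_le_arith_mean2_weighted (by linarith) (by linarith) (by positivity)
        (by positivity) (by ring)
    have e1 : (F θ ^ 2 : ℝ) ^ (p/2) = F θ ^ p := by
      rw [← Real.rpow_natCast (F θ) 2, ← Real.rpow_mul (hFnn θ)]
      congr 1; push_cast; ring
    have e2 : ((K ^ 2 : ℝ)) ^ (1 - p/2) = K ^ (2 - p) := by
      rw [← Real.rpow_natCast K 2, ← Real.rpow_mul hK.le]
      congr 1; push_cast; ring
    rw [e1, e2] at h1
    have h2 := mul_le_mul_of_nonneg_right h1 hKp2
    calc F θ ^ p = F θ ^ p * (K ^ (2 - p) * K ^ (p - 2)) := by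
          have : K ^ (2 - p) * K ^ (p - 2) = 1 := by
            rw [← Real.rpow_add hK]; norm_num
          rw [this, mul_one]
      _ = F θ ^ p * K ^ (2 - p) * K ^ (p - 2) := by ring
      _ ≤ ((p/2) * F θ ^ 2 + (1 - p/2) * K ^ 2) * K ^ (p - 2) := h2
  -- integrability
  have hmaj : IntervalIntegrable
      (fun θ => ((p/2) * F θ ^ 2 + (1 - p/2) * K ^ 2) * K ^ (p - 2) * r) volume 0 (2*π) := by
    have h1 : IntervalIntegrable
        (fun θ => (p/2) * K ^ (p - 2) * (F θ ^ 2 * r) + (1 - p/2) * K ^ 2 * K ^ (p - 2) * r)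
        volume 0 (2*π) :=
      (hint.const_mul _).add intervalIntegrable_const
    convert h1 using 2 with θ
    ring
  have hlhs : IntervalIntegrable (fun θ => F θ ^ p * r) volume 0 (2*π) := by
    refine hmaj.mono_fun ?_ ?_
    · have : Measurable fun θ => F θ ^ p * r := (hFmeas.pow_const p).mul_const r
      exact this.aestronglyMeasurable
    · refine Filter.Eventually.of_forall (fun θ => ?_)
      have h0 : 0 ≤ F θ ^ p * r := mul_nonneg (Real.rpow_nonneg (hFnn θ) p) hr.le
      have h1 : 0 ≤ ((p/2) * F θ ^ 2 + (1 - p/2) * K ^ 2) * K ^ (p - 2) * r := by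
        have : (0:ℝ) ≤ (p/2) * F θ ^ 2 + (1 - p/2) * K ^ 2 := by
          have := sq_nonneg (F θ); nlinarith [sq_nonneg K]
        positivity
      simp only [Real.norm_eq_abs, abs_of_nonneg h0, abs_of_nonneg h1]
      exact mul_le_mul_of_nonneg_right (hpt θ) hr.le
  -- integral comparison
  set I2 : ℝ := ∫ θ in (0:ℝ)..(2*π), F θ ^ 2 * r with hI2
  set Ip : ℝ := ∫ θ in (0:ℝ)..(2*π), F θ ^ p * r with hIp
  have hle0 : Ip ≤ ∫ θ in (0:ℝ)..(2*π),
      ((p/2) * F θ ^ 2 + (1 - p/2) * K ^ 2) * K ^ (p - 2) * r := by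
    refine intervalIntegral.integral_mono_on (by positivity) hlhs hmaj ?_
    exact fun θ _ => mul_le_mul_of_nonneg_right (hpt θ) hr.le
  have hcalc : (∫ θ in (0:ℝ)..(2*π),
      ((p/2) * F θ ^ 2 + (1 - p/2) * K ^ 2) * K ^ (p - 2) * r)
      = (p/2) * K ^ (p - 2) * I2 + (1 - p/2) * K ^ 2 * K ^ (p - 2) * L := by
    have e : (fun θ => ((p/2) * F θ ^ 2 + (1 - p/2) * K ^ 2) * K ^ (p - 2) * r)
        = fun θ => (p/2) * K ^ (p - 2) * (F θ ^ 2 * r) + (1 - p/2) * K ^ 2 * K ^ (p - 2) * r := by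
      funext θ; ring
    rw [e, intervalIntegral.integral_add (hint.const_mul _) intervalIntegrable_const,
      intervalIntegral.integral_const_mul, intervalIntegral.integral_const]
    rw [hI2, hLdef, smul_eq_mul, sub_zero]
    ring
  have key : Ip ≤ (p/2) * K ^ (p - 2) * I2 + (1 - p/2) * (K ^ p * L) := by
    have eB : K ^ (2:ℕ) * K ^ (p - 2) = K ^ p := by
      rw [← Real.rpow_natCast K 2, ← Real.rpow_add hK]
      congr 1; push_cast; ring
    calc Ip ≤ (p/2) * K ^ (p - 2) * I2 + (1 - p/2) * K ^ 2 * K ^ (p - 2) * L :=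
          hle0.trans_eq hcalc
      _ = (p/2) * K ^ (p - 2) * I2 + (1 - p/2) * (K ^ p * L) := by rw [← eB]; ring
  -- algebraic identities
  have eA : (L/c) ^ (2 - p) = K ^ (p - 2) := by
    have h1 : L/c = K⁻¹ := by rw [hKdef, inv_div]
    rw [h1, Real.inv_rpow hK.le, ← Real.rpow_neg hK.le]
    congr 1; ring
  have hLp1 : (0:ℝ) < L ^ (p-1) := Real.rpow_pos_of_pos hL0 _
  have eC : c ^ p / (p * L ^ (p-1)) = K ^ p * L / p := by
    have h1 : K ^ p = c ^ p / L ^ p := by rw [hKdef, Real.div_rpow hc.le hL0.le]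
    have h2 : L ^ p = L ^ (p-1) * L := by
      rw [← Real.rpow_add_one hL0.ne' (p-1)]; congr 1; ring
    rw [h1, h2]
    have hcp : (0:ℝ) < c ^ p := Real.rpow_pos_of_pos hc _
    field_simp
  have eD : K ^ (p - 2) * (c ^ 2 / (4*π*r)) = K ^ p * L / 2 := by
    have hcKL : c = K * L := by rw [hKdef]; field_simp
    have eB : K ^ (2:ℕ) * K ^ (p - 2) = K ^ p := by
      rw [← Real.rpow_natCast K 2, ← Real.rpow_add hK]
      congr 1; push_cast; ring
    have h4 : (4:ℝ)*π*r = 2*L := by rw [hLdef]; ring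
    rw [hcKL, h4, ← eB]
    field_simp
  -- finish
  rw [eA, eC]
  have h5 : (1/p) * Ip ≤ (1/p) * ((p/2) * K ^ (p - 2) * I2 + (1 - p/2) * (K ^ p * L)) :=
    mul_le_mul_of_nonneg_left key (by positivity)
  have h6 : (1/p) * ((p/2) * K ^ (p - 2) * I2 + (1 - p/2) * (K ^ p * L))
      = (1/2) * K ^ (p - 2) * I2 + (1/p - 1/2) * (K ^ p * L) := by
    field_simp
  have h7 : K ^ (p - 2) * ((1/2) * I2 - c ^ 2 / (4*π*r))
      = (1/2) * K ^ (p - 2) * I2 - K ^ p * L / 2 := by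
    rw [mul_sub, eD]; ring
  rw [h7]
  rw [h6] at h5
  have h8 : (1/p - 1/2) * (K ^ p * L) = K ^ p * L / p - K ^ p * L / 2 := by ring
  linarith
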